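/- Let (X,d) be a metric space, (γ_n) a sequence of positive reals, and (T_n) a family of self-maps of X that is jointly (P₂) with respect to (γ_n). Then for all m, n ∈ ℕ and all w ∈ X: d(T_n w, T_m w) ≤ (|γ_n − γ_m|/γ_n)·d(w, T_n w). -/

import Mathlib

/-- The joint (P₂) condition for a family of self-maps of a metric space
with respect to a sequence of positive reals. -/
def JointlyP2 {X : Type*} [MetricSpace X] (T : ℕ → X → X) (γ : ℕ → ℝ) : Prop :=
  ∀ n m : ℕ, ∀ x y : X,
    (1 / γ m) * (dist (T n x) (T m y) ^ 2 + dist y (T m y) ^ 2 - dist y (T n x) ^ 2) ≤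
    (1 / γ n) * (dist x (T m y) ^ 2 - dist x (T n x) ^ 2 - dist (T n x) (T m y) ^ 2)

theorem stmt13
    {X : Type*} [MetricSpace X]
    (γ : ℕ → ℝ) (hγ : ∀ n, 0 < γ n)
    (T : ℕ → X → X) (hJP2 : JointlyP2 T γ) :
    ∀ m n : ℕ, ∀ w : X,
      dist (T n w) (T m w) ≤ (|γ n - γ m| / γ n) * dist w (T n w) := by
  intro m n w
  have H := hJP2 n m w w
  set a := dist w (T n w) with ha
  set b := dist w (T m w) with hb
  set c := dist (T n w) (T m w) with hc
  have hn := hγ n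
  have hm := hγ m
  have htri1 : b ≤ a + c := dist_triangle w (T n w) (T m w)
  have htri2 : a ≤ b + c := by
    have h := dist_triangle w (T m w) (T n w)
    rw [dist_comm (T m w) (T n w)] at h
    exact h
  have htri3 : c ≤ a + b := by
    have h := dist_triangle (T n w) w (T m w)
    rw [dist_comm (T n w) w] at h
    exact h
  have ha0 : 0 ≤ a := dist_nonneg
  have hb0 : 0 ≤ b := dist_nonneg
  have hc0 : 0 ≤ c := dist_nonneg
  -- key: γ n * c^2 ≤ a * c * |γ n - γ m|
  have hkey : γ n * c ^ 2 ≤ a * c * |γ n - γ m| := by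
    have H' : c ^ 2 * (γ n + γ m) ≤ (b ^ 2 - a ^ 2) * (γ m - γ n) := by
      have h1 : (1 / γ m) * (c ^ 2 + b ^ 2 - a ^ 2) ≤
          (1 / γ n) * (b ^ 2 - a ^ 2 - c ^ 2) := H
      have hnm : 0 < γ n * γ m := mul_pos hn hm
      rw [div_mul_eq_mul_div, div_mul_eq_mul_div, div_le_div_iff₀ hm hn] at h1
      nlinarith [h1]
    have hbu : 0 ≤ (a + c) ^ 2 - b ^ 2 := by nlinarith
    have hbl : 0 ≤ b ^ 2 - (a - c) ^ 2 := by nlinarith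
    rcases le_or_gt (γ m) (γ n) with hle | hlt
    · rw [abs_of_nonneg (by linarith)]
      nlinarith [mul_nonneg hbl (sub_nonneg.2 hle)]
    · rw [abs_of_neg (by linarith)]
      nlinarith [mul_nonneg hbu (sub_nonneg.2 hlt.le)]
  rcases eq_or_lt_of_le hc0 with hc0' | hcpos
  · rw [← hc0']
    positivity
  · rw [div_mul_eq_mul_div, le_div_iff₀ hn]
    calc c * γ n = (γ n * c ^ 2) / c := by field_simp
      _ ≤ (a * c * |γ n - γ m|) / c := by gcongr
      _ = |γ n - γ m| * a := by field_simp
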